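/- Let K be an algebraically closed field of characteristic p > 0 and f ∈ K[[x]] with f(0) = 0 and multiplicity m = m(f). Suppose the p-adic valuation e(m) of m equals e(f) := min {e(n) : n ∈ supp(f)}. Then f is right equivalent to x^m, i.e., there is a formal coordinate change φ(x) = a₁x + a₂x² + ... (a₁ ≠ 0) with f(φ(x)) = x^m. -/

import Mathlib

open PowerSeries Finset

namespace Stmt8

section CommRing
variable {K : Type*} [CommRing K]

lemma agree_mul {a a' b b' : PowerSeries K} {n : ℕ}
    (ha : ∀ i ≤ n, coeff i a = coeff i a') (hb : ∀ i ≤ n, coeff i b = coeff i b') :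
    ∀ i ≤ n, coeff i (a * b) = coeff i (a' * b') := by
  intro i hi
  rw [coeff_mul, coeff_mul]
  refine Finset.sum_congr rfl fun x hx => ?_
  rw [Finset.HasAntidiagonal.mem_antidiagonal] at hx
  rw [ha x.1 (by omega), hb x.2 (by omega)]

lemma agree_pow {a b : PowerSeries K} {n : ℕ}
    (h : ∀ i ≤ n, coeff i a = coeff i b) (j : ℕ) :
    ∀ i ≤ n, coeff i (a ^ j) = coeff i (b ^ j) := by
  induction j with
  | zero => simp
  | succ j ih =>
    intro i hi
    rw [pow_succ, pow_succ]
    exact agree_mul ih h i hi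

lemma coeff_pow_eq_zero {a : PowerSeries K} (ha : constantCoeff a = 0) :
    ∀ {j n : ℕ}, n < j → coeff n (a ^ j) = 0 := by
  intro j
  induction j with
  | zero => intro n h; omega
  | succ j ih =>
    intro n h
    rw [pow_succ, coeff_mul]
    apply Finset.sum_eq_zero
    intro x hx
    rw [Finset.HasAntidiagonal.mem_antidiagonal] at hx
    rcases Nat.lt_or_ge x.1 j with h1 | h1
    · rw [ih h1, zero_mul]
    · have : x.2 = 0 := by omega
      rw [this, coeff_zero_eq_constantCoeff, ha, mul_zero]

lemma coeff_pow_self {a : PowerSeries K} (ha : constantCoeff a = 0) (n : ℕ) :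
    coeff n (a ^ n) = (coeff 1 a) ^ n := by
  induction n with
  | zero => simp
  | succ n ih =>
    rw [pow_succ, coeff_mul]
    rw [Finset.sum_eq_single (n, 1)]
    · rw [ih, pow_succ]
    · intro x hx hne
      rw [Finset.HasAntidiagonal.mem_antidiagonal] at hx
      rcases Nat.lt_or_ge x.1 n with h1 | h1
      · rw [coeff_pow_eq_zero ha h1, zero_mul]
      · have : x.2 = 0 ∨ x = (n, 1) := by
          rcases Nat.lt_or_ge x.1 (n + 1) with h2 | h2
          · right
            have : x.1 = n := by omega
            have : x.2 = 1 := by omega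
            exact Prod.ext (by omega) this
          · left; omega
        rcases this with h2 | h2
        · rw [h2, coeff_zero_eq_constantCoeff, ha, mul_zero]
        · exact absurd h2 hne
    · intro h
      exact absurd (Finset.HasAntidiagonal.mem_antidiagonal.2 (by omega)) h


lemma agree_pow_order {a b : PowerSeries K} {k : ℕ}
    (ha : constantCoeff a = 0) (hb : constantCoeff b = 0)
    (h : ∀ i ≤ k, coeff i a = coeff i b) (j : ℕ) :
    ∀ t, t < k + j → coeff t (a ^ j) = coeff t (b ^ j) := by
  induction j with
  | zero => intro t ht; rfl
  | succ j ih =>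
    intro t ht
    rw [pow_succ, pow_succ, coeff_mul, coeff_mul]
    refine Finset.sum_congr rfl fun x hx => ?_
    rw [Finset.HasAntidiagonal.mem_antidiagonal] at hx
    rcases Nat.eq_zero_or_pos x.2 with h0 | hpos
    · rw [h0, coeff_zero_eq_constantCoeff, ha, hb, mul_zero, mul_zero]
    · rcases le_or_gt x.2 k with h2 | h2
      · rw [h x.2 h2, ih x.1 (by omega)]
      · rw [coeff_pow_eq_zero ha (by omega), coeff_pow_eq_zero hb (by omega),
          zero_mul, zero_mul]

lemma top_pow {a b : PowerSeries K} {k : ℕ}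
    (ha : constantCoeff a = 0) (hb : constantCoeff b = 0)
    (h : ∀ i ≤ k, coeff i a = coeff i b) (hk : 1 ≤ k) (j : ℕ) :
    coeff (k + j) (a ^ j) = coeff (k + j) (b ^ j)
      + (j : K) * (coeff 1 a) ^ (j - 1) * (coeff (k + 1) a - coeff (k + 1) b) := by
  induction j with
  | zero => simp
  | succ j ih =>
    have key : ∀ x ∈ Finset.HasAntidiagonal.antidiagonal (k + (j + 1)),
        coeff x.1 a * coeff x.2 (a ^ j) - coeff x.1 b * coeff x.2 (b ^ j)
        = (if x = (1, k + j) then (j : K) * (coeff 1 a) ^ j * (coeff (k+1) a - coeff (k+1) b) else 0)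
          + (if x = (k + 1, j) then (coeff 1 a) ^ j * (coeff (k+1) a - coeff (k+1) b) else 0) := by
      intro x hx
      rw [Finset.HasAntidiagonal.mem_antidiagonal] at hx
      by_cases e1 : x = (1, k + j)
      · subst e1
        rw [if_pos rfl, if_neg (by simp [Prod.ext_iff]; omega), add_zero]
        simp only []
        rw [ih, h 1 hk]
        rcases Nat.eq_zero_or_pos j with hj | hj
        · subst hj; simp
        · have hpw : coeff 1 b ^ (j - 1) * coeff 1 b = coeff 1 b ^ j := by
            rw [← pow_succ]; congr 1; omega
          linear_combination ((j : K) * ((coeff (k+1)) a - (coeff (k+1)) b)) * hpw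
      · by_cases e2 : x = (k + 1, j)
        · subst e2
          rw [if_neg e1, if_pos rfl, zero_add]
          simp only []
          rw [coeff_pow_self ha, coeff_pow_self hb, h 1 hk]
          ring
        · rw [if_neg e1, if_neg e2, add_zero, sub_eq_zero]
          rcases Nat.eq_zero_or_pos x.1 with h0 | hpos
          · rw [h0, coeff_zero_eq_constantCoeff, ha, hb, zero_mul, zero_mul]
          · rcases le_or_gt x.1 k with h2 | h2
            · have hx2 : x.2 < k + j := by
                rcases lt_or_ge x.2 (k + j) with h3 | h3
                · exact h3
                · exfalso
                  exact e1 (Prod.ext (by omega) (by omega))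
              rw [h x.1 h2, agree_pow_order ha hb h j x.2 hx2]
            · rcases lt_or_ge x.2 j with h3 | h3
              · rw [coeff_pow_eq_zero ha h3, coeff_pow_eq_zero hb h3, mul_zero, mul_zero]
              · exfalso
                exact e2 (Prod.ext (by omega) (by omega))
    have main : coeff (k + (j+1)) (a ^ (j+1)) - coeff (k + (j+1)) (b ^ (j+1))
        = ((j:K) + 1) * (coeff 1 a) ^ j * (coeff (k+1) a - coeff (k+1) b) := by
      rw [pow_succ', pow_succ', coeff_mul, coeff_mul, ← Finset.sum_sub_distrib,
        Finset.sum_congr rfl key, Finset.sum_add_distrib,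
        Finset.sum_ite_eq' (Finset.HasAntidiagonal.antidiagonal (k + (j+1))) ((1, k + j) : ℕ × ℕ),
        Finset.sum_ite_eq' (Finset.HasAntidiagonal.antidiagonal (k + (j+1))) ((k + 1, j) : ℕ × ℕ),
        if_pos (Finset.HasAntidiagonal.mem_antidiagonal.2 (by omega)),
        if_pos (Finset.HasAntidiagonal.mem_antidiagonal.2 (by omega))]
      ring
    simp only [Nat.add_sub_cancel]
    push_cast
    linear_combination main

/-- Composition `h ∘ g` of power series, for `g` with zero constant term. -/
noncomputable def pscomp (g h : PowerSeries K) : PowerSeries K :=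
  mk fun n => coeff n (Polynomial.eval₂ (C) g (trunc (n + 1) h))

lemma coeff_eval₂ {g : PowerSeries K} (hg : constantCoeff g = 0) (P : Polynomial K) (n : ℕ) :
    coeff n (Polynomial.eval₂ (C) g P)
      = ∑ j ∈ range (n + 1), P.coeff j * coeff n (g ^ j) := by
  rw [Polynomial.eval₂_eq_sum_range, map_sum]
  simp only [coeff_C_mul]
  have h1 : ∑ j ∈ range (P.natDegree + 1), P.coeff j * coeff n (g ^ j)
      = ∑ j ∈ range (max (P.natDegree + 1) (n + 1)), P.coeff j * coeff n (g ^ j) := by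
    refine Finset.sum_subset (Finset.range_subset_range.2 (le_max_left _ _)) fun i _ hi => ?_
    rw [Finset.mem_range, not_lt] at hi
    rw [Polynomial.coeff_eq_zero_of_natDegree_lt (by omega), zero_mul]
  have h2 : ∑ j ∈ range (n + 1), P.coeff j * coeff n (g ^ j)
      = ∑ j ∈ range (max (P.natDegree + 1) (n + 1)), P.coeff j * coeff n (g ^ j) := by
    refine Finset.sum_subset (Finset.range_subset_range.2 (le_max_right _ _)) fun i _ hi => ?_
    rw [Finset.mem_range, not_lt] at hi
    rw [coeff_pow_eq_zero hg (by omega), mul_zero]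
  rw [h1, ← h2]

lemma coeff_eval₂_congr {g : PowerSeries K} (hg : constantCoeff g = 0)
    {P Q : Polynomial K} {n : ℕ} (h : ∀ j ≤ n, P.coeff j = Q.coeff j) :
    coeff n (Polynomial.eval₂ (C) g P) = coeff n (Polynomial.eval₂ (C) g Q) := by
  rw [coeff_eval₂ hg, coeff_eval₂ hg]
  exact Finset.sum_congr rfl fun j hj => by
    rw [h j (by simpa [Nat.lt_succ_iff] using hj)]

lemma coeff_pscomp {g : PowerSeries K} (hg : constantCoeff g = 0) (h : PowerSeries K) (n : ℕ) :
    coeff n (pscomp g h) = ∑ j ∈ range (n + 1), coeff j h * coeff n (g ^ j) := by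
  rw [pscomp, coeff_mk, coeff_eval₂ hg]
  exact Finset.sum_congr rfl fun j hj => by
    rw [coeff_trunc, if_pos (Finset.mem_range.1 hj)]

lemma pscomp_mul {g : PowerSeries K} (hg : constantCoeff g = 0) (h₁ h₂ : PowerSeries K) :
    pscomp g (h₁ * h₂) = pscomp g h₁ * pscomp g h₂ := by
  ext n
  have e0 : coeff n (pscomp g (h₁ * h₂))
      = coeff n (Polynomial.eval₂ (C) g (trunc (n+1) h₁ * trunc (n+1) h₂)) := by
    rw [pscomp, coeff_mk]
    apply coeff_eval₂_congr hg
    intro j hj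
    have hjn : j < n + 1 := by omega
    have h2 := congrArg (fun q : Polynomial K => q.coeff j) (trunc_trunc_mul_trunc (n := n + 1) h₁ h₂)
    simp only [coeff_trunc] at h2
    rw [if_pos hjn, if_pos hjn] at h2
    rw [coeff_trunc, if_pos hjn, ← h2, ← Polynomial.coe_mul, Polynomial.coeff_coe]
  rw [e0, Polynomial.eval₂_mul, coeff_mul, coeff_mul]
  refine Finset.sum_congr rfl fun x hx => ?_
  rw [Finset.HasAntidiagonal.mem_antidiagonal] at hx
  congr 1 <;>
  · rw [pscomp, coeff_mk]
    apply coeff_eval₂_congr hg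
    intro j hj
    rw [coeff_trunc, coeff_trunc, if_pos (by omega), if_pos (by omega)]

lemma pscomp_add {g : PowerSeries K} (hg : constantCoeff g = 0) (h₁ h₂ : PowerSeries K) :
    pscomp g (h₁ + h₂) = pscomp g h₁ + pscomp g h₂ := by
  ext n
  rw [map_add, coeff_pscomp hg, coeff_pscomp hg, coeff_pscomp hg, ← Finset.sum_add_distrib]
  exact Finset.sum_congr rfl fun j _ => by rw [map_add, add_mul]

lemma pscomp_one {g : PowerSeries K} (hg : constantCoeff g = 0) :
    pscomp g 1 = 1 := by
  ext n
  rw [coeff_pscomp hg, Finset.sum_eq_single 0]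
  · simp
  · intro j hj hne
    rw [coeff_one, if_neg hne, zero_mul]
  · intro hn; simp at hn

lemma pscomp_C {g : PowerSeries K} (hg : constantCoeff g = 0) (c : K) :
    pscomp g (C c) = C c := by
  ext n
  rw [coeff_pscomp hg, Finset.sum_eq_single 0]
  · simp [coeff_C, coeff_one]
  · intro j hj hne
    rw [coeff_C, if_neg hne, zero_mul]
  · intro hn; simp at hn

lemma pscomp_zero {g : PowerSeries K} (hg : constantCoeff g = 0) :
    pscomp g 0 = 0 := by
  ext n
  rw [coeff_pscomp hg]
  simp

/-- `pscomp g` as an algebra homomorphism. -/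
noncomputable def pscompAlgHom (g : PowerSeries K) (hg : constantCoeff g = 0) :
    PowerSeries K →ₐ[K] PowerSeries K where
  toFun := pscomp g
  map_one' := pscomp_one hg
  map_mul' := pscomp_mul hg
  map_zero' := pscomp_zero hg
  map_add' := pscomp_add hg
  commutes' r := by
    show pscomp g (algebraMap K (PowerSeries K) r) = algebraMap K (PowerSeries K) r
    rw [PowerSeries.algebraMap_apply]
    simp [pscomp_C hg]

@[simp] lemma pscompAlgHom_apply (g : PowerSeries K) (hg : constantCoeff g = 0)
    (h : PowerSeries K) : pscompAlgHom g hg h = pscomp g h := rfl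


/-- Coefficients of `p^e`-th powers in characteristic `p`. -/
lemma coeff_pow_char (p : ℕ) [hp : Fact p.Prime] [CharP K p] (h : PowerSeries K) (e n : ℕ) :
    coeff n (h ^ p ^ e)
      = if p ^ e ∣ n then (coeff (n / p ^ e) h) ^ p ^ e else 0 := by
  haveI : ExpChar K p := ExpChar.prime hp.out
  have hq : 0 < p ^ e := pow_pos hp.out.pos e
  set T : Polynomial K := trunc (n + 1) h with hT
  have hagree : ∀ i ≤ n, coeff i h = coeff i (T : PowerSeries K) := by
    intro i hi
    rw [Polynomial.coeff_coe, coeff_trunc, if_pos (by omega)]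
  have e1 : coeff n (h ^ p ^ e) = coeff n ((T : PowerSeries K) ^ p ^ e) :=
    agree_pow hagree (p ^ e) n le_rfl
  rw [e1, ← Polynomial.coe_pow, Polynomial.coeff_coe, ← Polynomial.map_iterateFrobenius_expand,
    Polynomial.coeff_map, Polynomial.coeff_expand hq]
  rw [apply_ite (⇑(iterateFrobenius K p e)), map_zero]
  have hfrob : ∀ x : K, (iterateFrobenius K p e) x = x ^ p ^ e := by
    intro x
    rw [iterateFrobenius_def]
  split_ifs with hdvd
  · rw [hfrob]
    congr 1
    rw [hT, coeff_trunc, if_pos (by have := Nat.div_le_self n (p ^ e); omega)]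
  · rfl


end CommRing

section Field
variable {K : Type*} [Field K]

lemma pscomp_injective {g : PowerSeries K} (hg : constantCoeff g = 0)
    (hg1 : coeff 1 g ≠ 0) : Function.Injective (pscompAlgHom g hg) := by
  rw [injective_iff_map_eq_zero]
  intro h hh
  by_contra hne
  have hex : ∃ n, coeff n h ≠ 0 := by
    by_contra hall
    push_neg at hall
    exact hne (PowerSeries.ext fun n => by rw [hall n, map_zero])
  classical
  let d := Nat.find hex
  have hd : coeff d h ≠ 0 := Nat.find_spec hex
  have hlt : ∀ i < d, coeff i h = 0 := fun i hi => by
    by_contra hzi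
    exact Nat.find_min hex hi hzi
  have h0 : coeff d (pscompAlgHom g hg h) = coeff d h * (coeff 1 g) ^ d := by
    rw [pscompAlgHom_apply, coeff_pscomp hg, Finset.sum_eq_single d]
    · rw [coeff_pow_self hg]
    · intro j hj hne'
      rw [Finset.mem_range] at hj
      rw [hlt j (by omega), zero_mul]
    · intro hn; simp at hn
  rw [hh, map_zero] at h0
  exact hd (by
    rcases mul_eq_zero.1 h0.symm with h1 | h1
    · exact h1
    · exact absurd h1 (pow_ne_zero d hg1))

/-- coefficients of a preimage under composition, constructed by recursion. -/
noncomputable def invC (g t : PowerSeries K) : ℕ → K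
  | n => (coeff n t - ∑ j ∈ (range n).attach,
        invC g t j * coeff n (g ^ (j : ℕ))) * ((coeff 1 g) ^ n)⁻¹
  decreasing_by exact Finset.mem_range.1 j.2

lemma pscomp_surjective {g : PowerSeries K} (hg : constantCoeff g = 0)
    (hg1 : coeff 1 g ≠ 0) : Function.Surjective (pscompAlgHom g hg) := by
  intro t
  refine ⟨mk (invC g t), ?_⟩
  ext n
  rw [pscompAlgHom_apply, coeff_pscomp hg, Finset.sum_range_succ, coeff_pow_self hg]
  have hstep : invC g t n = (coeff n t - ∑ j ∈ (range n).attach,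
      invC g t j * coeff n (g ^ (j : ℕ))) * ((coeff 1 g) ^ n)⁻¹ := by
    rw [invC]
  have hsum : ∑ j ∈ range n, coeff j (mk (invC g t)) * coeff n (g ^ j)
      = ∑ j ∈ (range n).attach, invC g t j * coeff n (g ^ (j : ℕ)) := by
    rw [← Finset.sum_attach (range n) (fun j => coeff j (mk (invC g t)) * coeff n (g ^ j))]
    exact Finset.sum_congr rfl fun j _ => by rw [coeff_mk]
  rw [hsum, coeff_mk, hstep]
  field_simp
  ring

/-- Composition with an invertible coordinate change as an algebra automorphism. -/
noncomputable def pscompAlgEquiv (g : PowerSeries K) (hg : constantCoeff g = 0)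
    (hg1 : coeff 1 g ≠ 0) : PowerSeries K ≃ₐ[K] PowerSeries K :=
  AlgEquiv.ofBijective (pscompAlgHom g hg) ⟨pscomp_injective hg hg1, pscomp_surjective hg hg1⟩

lemma pscompAlgEquiv_apply (g : PowerSeries K) (hg : constantCoeff g = 0)
    (hg1 : coeff 1 g ≠ 0) (h : PowerSeries K) :
    pscompAlgEquiv g hg hg1 h = pscomp g h := rfl


/-- successive polynomial approximations of the coordinate change -/
noncomputable def Gseq (F : PowerSeries K) (m' : ℕ) (z : K) : ℕ → PowerSeries K
  | 0 => C z * X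
  | (k+1) => Gseq F m' z k
      + C (-(∑ j ∈ range (m' + k + 2),
            coeff j F * coeff (m' + k + 1) (Gseq F m' z k ^ j))
          * (((m' : K)) * coeff m' F * z ^ (m' - 1))⁻¹) * X ^ (k + 2)

lemma hcoeffCX (c : K) (t i : ℕ) : coeff i (C c * X ^ t) = if i = t then c else 0 := by
  rw [coeff_C_mul, coeff_X_pow]; split_ifs <;> simp

lemma exists_comp_eq_X_pow (F : PowerSeries K) (m' : ℕ) (hm' : 1 ≤ m')
    (hFlt : ∀ j < m', coeff j F = 0) (hFm : coeff m' F ≠ 0) (hmK : (m' : K) ≠ 0)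
    (hroot : ∃ z : K, z ^ m' = (coeff m' F)⁻¹) :
    ∃ g : PowerSeries K, constantCoeff g = 0 ∧ coeff 1 g ≠ 0 ∧ pscomp g F = X ^ m' := by
  obtain ⟨z, hz⟩ := hroot
  have hz0 : z ≠ 0 := by
    intro h
    rw [h, zero_pow (by omega)] at hz
    exact inv_ne_zero hFm hz.symm
  set den : K := (m' : K) * coeff m' F * z ^ (m' - 1) with hden_def
  have hden : den ≠ 0 :=
    mul_ne_zero (mul_ne_zero hmK hFm) (pow_ne_zero _ hz0)
  set G : ℕ → PowerSeries K := Gseq F m' z with hG_def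
  have hGsucc : ∀ k, G (k+1) = G k
      + C (-(∑ j ∈ range (m' + k + 2),
            coeff j F * coeff (m' + k + 1) (G k ^ j)) * den⁻¹) * X ^ (k + 2) :=
    fun k => rfl
  have hstab : ∀ k, ∀ i ≤ k + 1, coeff i (G (k+1)) = coeff i (G k) := by
    intro k i hi
    rw [hGsucc, map_add, hcoeffCX, if_neg (by omega), add_zero]
  have hstab' : ∀ k k', k ≤ k' → ∀ i, i ≤ k + 1 → coeff i (G k') = coeff i (G k) := by
    intro k k' hk
    induction k' , hk using Nat.le_induction with
    | base => intro i _; rfl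
    | succ k' hk ih =>
      intro i hi
      rw [hstab k' i (by omega), ih i hi]
  have hG1 : ∀ k, coeff 1 (G k) = z := by
    intro k
    have h0 : coeff 1 (G 0) = z := by
      show coeff 1 (C z * X) = z
      rw [← pow_one (X : PowerSeries K), hcoeffCX, if_pos rfl]
    rw [hstab' 0 k (by omega) 1 (by omega), h0]
  have hG0 : ∀ k, constantCoeff (G k) = 0 := by
    intro k
    rw [← coeff_zero_eq_constantCoeff_apply, hstab' 0 k (by omega) 0 (by omega)]
    show coeff 0 (C z * X) = 0
    rw [← pow_one (X : PowerSeries K), hcoeffCX, if_neg (by omega)]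
  have hGhigh : ∀ k i, k + 1 < i → coeff i (G k) = 0 := by
    intro k
    induction k with
    | zero =>
      intro i hi
      show coeff i (C z * X) = 0
      rw [← pow_one (X : PowerSeries K), hcoeffCX, if_neg (by omega)]
    | succ k ih =>
      intro i hi
      rw [hGsucc, map_add, hcoeffCX, if_neg (by omega), add_zero, ih i (by omega)]
  set g : PowerSeries K := mk (fun n => coeff n (G n)) with hg_def
  have hgG : ∀ k, ∀ i ≤ k + 1, coeff i g = coeff i (G k) := by
    intro k i hi
    rw [hg_def, coeff_mk]
    rcases le_or_gt i k with h | h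
    · exact (hstab' i k h i (by omega)).symm
    · have : i = k + 1 := by omega
      subst this
      exact hstab k (k+1) le_rfl
  have hg0 : constantCoeff g = 0 := by
    rw [← coeff_zero_eq_constantCoeff_apply, hgG 0 0 (by omega),
      coeff_zero_eq_constantCoeff_apply]
    exact hG0 0
  have hg1 : coeff 1 g = z := by rw [hgG 0 1 le_rfl, hG1 0]
  have hS0 : ∑ j ∈ range (m' + 1), coeff j F * coeff m' (G 0 ^ j) = 1 := by
    rw [Finset.sum_eq_single m']
    · have hpow : (G 0) ^ m' = C (z ^ m') * X ^ m' := by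
        show (C z * X) ^ m' = _
        rw [mul_pow, ← map_pow]
      rw [hpow, hcoeffCX, if_pos rfl, hz, mul_inv_cancel₀ hFm]
    · intro j hj hne
      rw [Finset.mem_range] at hj
      rw [hFlt j (by omega), zero_mul]
    · intro h
      exact absurd (Finset.mem_range.2 (by omega)) h
  have hSsucc : ∀ k, ∑ j ∈ range (m' + k + 2),
      coeff j F * coeff (m' + k + 1) (G (k+1) ^ j) = 0 := by
    intro k
    have hagree : ∀ i ≤ k + 1, coeff i (G (k+1)) = coeff i (G k) := hstab k
    have hdelta : coeff (k+2) (G (k+1)) - coeff (k+2) (G k)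
        = -(∑ j ∈ range (m' + k + 2),
            coeff j F * coeff (m' + k + 1) (G k ^ j)) * den⁻¹ := by
      rw [hGsucc, map_add, hcoeffCX, if_pos rfl, hGhigh k (k+2) (by omega)]
      ring
    have key : ∀ j ∈ range (m' + k + 2),
        coeff j F * coeff (m' + k + 1) (G (k+1) ^ j)
          = coeff j F * coeff (m' + k + 1) (G k ^ j)
            + (if j = m' then coeff m' F * ((m' : K) * z ^ (m' - 1)
                * (-(∑ i ∈ range (m' + k + 2),
                    coeff i F * coeff (m' + k + 1) (G k ^ i)) * den⁻¹)) else 0) := by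
      intro j hj
      rcases lt_trichotomy j m' with h | h | h
      · rw [hFlt j h, if_neg (by omega), zero_mul, zero_mul, add_zero]
      · rw [if_pos h, h]
        have htop := top_pow (hG0 (k+1)) (hG0 k) hagree (by omega) m'
        have hn : k + 1 + m' = m' + k + 1 := by omega
        rw [hn] at htop
        rw [htop, hG1 (k+1), hdelta]
        ring
      · rw [if_neg (by omega), add_zero,
          agree_pow_order (hG0 (k+1)) (hG0 k) hagree j (m' + k + 1) (by omega)]
    rw [Finset.sum_congr rfl key, Finset.sum_add_distrib,
      Finset.sum_ite_eq' (range (m' + k + 2)) m', if_pos (Finset.mem_range.2 (by omega)),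
      hden_def]
    field_simp
    ring
  refine ⟨g, hg0, by rw [hg1]; exact hz0, ?_⟩
  ext n
  rw [coeff_pscomp hg0, coeff_X_pow]
  rcases lt_or_ge n m' with h | h
  · rw [if_neg (by omega)]
    apply Finset.sum_eq_zero
    intro j hj
    rw [Finset.mem_range] at hj
    rw [hFlt j (by omega), zero_mul]
  · obtain ⟨k, rfl⟩ : ∃ k, n = m' + k := ⟨n - m', by omega⟩
    have hsum : ∑ j ∈ range (m' + k + 1), coeff j F * coeff (m' + k) (g ^ j)
        = ∑ j ∈ range (m' + k + 1), coeff j F * coeff (m' + k) (G k ^ j) := by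
      refine Finset.sum_congr rfl fun j hj => ?_
      rw [Finset.mem_range] at hj
      rcases lt_or_ge j m' with h1 | h1
      · rw [hFlt j h1, zero_mul, zero_mul]
      · rw [agree_pow_order hg0 (hG0 k) (hgG k) j (m' + k) (by omega)]
    rw [hsum]
    cases k with
    | zero =>
      simp only [Nat.add_zero]
      rw [hS0]
      simp
    | succ k' =>
      have e1 : m' + (k' + 1) + 1 = m' + k' + 2 := by omega
      have e2 : m' + (k' + 1) = m' + k' + 1 := by omega
      rw [e1, e2, hSsucc k', if_neg (by omega)]

end Field

end Stmt8

open Stmt8 PowerSeries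

theorem stmt_8 (K : Type*) [Field K] [IsAlgClosed K] (p : ℕ) (hp : p.Prime) [CharP K p]
    (f : PowerSeries K) (hf0 : constantCoeff f = 0) (m : ℕ)
    (hm : coeff m f ≠ 0) (hmin : ∀ i < m, coeff i f = 0)
    (he : padicValNat p m = sInf (padicValNat p '' {n | coeff n f ≠ 0})) :
    ∃ Φ : PowerSeries K ≃ₐ[K] PowerSeries K, Φ f = X ^ m := by
  haveI : Fact p.Prime := ⟨hp⟩
  haveI : ExpChar K p := ExpChar.prime hp
  have hm0 : m ≠ 0 := by
    intro h
    rw [h, coeff_zero_eq_constantCoeff_apply, hf0] at hm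
    exact hm rfl
  set e : ℕ := padicValNat p m with he_def
  set q : ℕ := p ^ e with hq_def
  have hq0 : 0 < q := pow_pos hp.pos e
  -- every exponent in the support is divisible by q
  have hsupp : ∀ n, coeff n f ≠ 0 → q ∣ n := by
    intro n hn
    have hn0 : n ≠ 0 := by
      intro h
      rw [h, coeff_zero_eq_constantCoeff_apply, hf0] at hn
      exact hn rfl
    have hle : e ≤ padicValNat p n := by
      rw [he]
      exact csInf_le (OrderBot.bddBelow _) ⟨n, hn, rfl⟩
    rw [hq_def]
    exact dvd_trans (pow_dvd_pow p hle) (pow_padicValNat_dvd)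
  have hqm : q ∣ m := hsupp m hm
  set m' : ℕ := m / q with hm'_def
  have hmq : m = q * m' := (Nat.mul_div_cancel' hqm).symm
  have hm'0 : m' ≠ 0 := by
    intro h
    rw [h, mul_zero] at hmq
    exact hm0 hmq
  have hpm' : ¬ p ∣ m' := by
    intro hdvd
    have : p ^ (e + 1) ∣ m := by
      rw [hmq, hq_def, pow_succ]
      exact mul_dvd_mul_left _ hdvd
    have := (Nat.Prime.pow_dvd_iff_le_factorization hp hm0).1 this
    rw [Nat.factorization_def _ hp] at this
    omega
  have hm'K : (m' : K) ≠ 0 := by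
    rw [Ne, CharP.cast_eq_zero_iff K p m']
    exact hpm'
  -- the q-th root of f via inverse Frobenius on coefficients
  set ρ : K ≃+* K := (iterateFrobeniusEquiv K p e).symm with hρ_def
  have hρ_pow : ∀ x : K, (ρ x) ^ q = x := by
    intro x
    have := (iterateFrobeniusEquiv K p e).apply_symm_apply x
    rwa [iterateFrobeniusEquiv_def] at this
  set F : PowerSeries K := mk (fun j => ρ (coeff (q * j) f)) with hF_def
  have hFpow : F ^ q = f := by
    ext n
    rw [hq_def, coeff_pow_char p F e n, ← hq_def]
    split_ifs with hdvd
    · rw [hF_def, coeff_mk, hρ_pow, Nat.mul_div_cancel' hdvd]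
    · by_contra hne
      exact hdvd (hsupp n fun h => hne h.symm)
  have hFlt : ∀ j < m', coeff j F = 0 := by
    intro j hj
    rw [hF_def, coeff_mk, hmin (q * j) (by rw [hmq]; exact (Nat.mul_lt_mul_left hq0).2 hj), map_zero]
  have hFm' : coeff m' F ≠ 0 := by
    rw [hF_def, coeff_mk, ← hmq]
    intro h
    exact hm (by simpa using congrArg (iterateFrobeniusEquiv K p e) h)
  obtain ⟨g, hg0, hg1, hgF⟩ := exists_comp_eq_X_pow F m' (Nat.one_le_iff_ne_zero.mpr hm'0) hFlt hFm' hm'K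
    (IsAlgClosed.exists_pow_nat_eq _ (Nat.pos_of_ne_zero hm'0))
  refine ⟨pscompAlgEquiv g hg0 hg1, ?_⟩
  have : pscompAlgEquiv g hg0 hg1 f = pscompAlgEquiv g hg0 hg1 (F ^ q) := by rw [hFpow]
  have hmm : m' * q = m := by rw [Nat.mul_comm]; exact hmq.symm
  rw [this, map_pow, pscompAlgEquiv_apply, hgF, ← pow_mul, hmm]
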